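/- For every l ≥ 1 and every sequence of reals r ≥ x₁ ≥ x₂ ≥ ... ≥ x_l ≥ 0 with r > 0, the quantity f((x₁,...,x_l), r) := x₁·(2/r) + Σ_{k=2}^{l} x_k·(2^k/r)·∏_{j=1}^{k-1} exp(−x_j·2^j/r) is at most 5. -/

import Mathlib

open Finset

/-- `f((x₁,...,x_l), r) = x₁·(2/r) + Σ_{k=2}^{l} x_k·(2^k/r)·∏_{j=1}^{k-1} exp(−x_j·2^j/r)`,
with the list entry `L[k-1]` playing the role of `x_k`. -/
noncomputable def f (L : List ℝ) (r : ℝ) : ℝ :=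
  ∑ k ∈ Finset.range L.length,
    L.getD k 0 * (2 ^ (k + 1) / r) *
      ∏ j ∈ Finset.range k, Real.exp (-(L.getD j 0 * 2 ^ (j + 1) / r))

lemma getD_map_two (M : List ℝ) (j : ℕ) :
    (M.map (fun y => 2 * y)).getD j 0 = 2 * M.getD j 0 := by
  rcases lt_or_ge j M.length with h | h
  · rw [List.getD_eq_getElem _ _ (by simpa using h), List.getD_eq_getElem _ _ h]
    simp
  · rw [List.getD_eq_default _ _ (by simpa using h), List.getD_eq_default _ _ h]
    ring

lemma f_cons (x : ℝ) (M : List ℝ) (r : ℝ) :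
    f (x :: M) r = x * (2 / r) +
      Real.exp (-(x * 2 / r)) * f (M.map (fun y => 2 * y)) r := by
  unfold f
  rw [List.length_cons, Finset.sum_range_succ', Finset.mul_sum, add_comm]
  congr 1
  · norm_num
  · simp only [List.length_map]
    apply Finset.sum_congr rfl
    intro k _
    rw [Finset.prod_range_succ']
    simp only [List.getD_cons_zero, List.getD_cons_succ, getD_map_two]
    have h1 : ∀ j : ℕ, Real.exp (-(M.getD j 0 * 2 ^ (j + 1 + 1) / r)) =
        Real.exp (-(2 * M.getD j 0 * 2 ^ (j + 1) / r)) := by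
      intro j; congr 1; ring
    rw [Finset.prod_congr rfl (fun j _ => h1 j)]
    have h2 : x * 2 ^ (0 + 1) / r = x * 2 / r := by ring
    rw [h2]
    have h3 : (2 : ℝ) ^ (k + 1 + 1) = 2 * 2 ^ (k + 1) := by ring
    rw [h3]
    ring

lemma aux : ∀ (n : ℕ) (L : List ℝ) (r : ℝ), L.length = n → 0 < r →
    L.Chain' (· ≥ ·) → (∀ x ∈ L, 0 ≤ x) → f L r ≤ L.headD 0 * 2 / r + 3 := by
  intro n
  induction n with
  | zero =>
    intro L r hlen hr _ _
    rw [List.length_eq_zero_iff] at hlen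
    subst hlen
    simp [f]
  | succ n ih =>
    rintro (_ | ⟨x, M⟩) r hlen hr hchain hnonneg
    · simp at hlen
    · rw [f_cons]
      have hx : 0 ≤ x := hnonneg x (by simp)
      set t := x * 2 / r with ht
      have htnn : 0 ≤ t := by positivity
      have htail : M.Chain' (· ≥ ·) := (List.isChain_cons.1 hchain).2
      have hchain' : (M.map (fun y => 2 * y)).Chain' (· ≥ ·) := by
        show List.IsChain _ _
        rw [List.isChain_map]
        exact htail.imp (fun a b hab => by simp only [ge_iff_le]; linarith)
      have hnn' : ∀ y ∈ M.map (fun y => 2 * y), 0 ≤ y := by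
        intro y hy
        simp only [List.mem_map] at hy
        obtain ⟨a, ha, rfl⟩ := hy
        have := hnonneg a (by simp [ha])
        linarith
      have hlen' : (M.map (fun y => 2 * y)).length = n := by
        simpa using Nat.succ_injective (by simpa using hlen)
      have hIH := ih _ r hlen' hr hchain' hnn'
      have hhead : (M.map (fun y => 2 * y)).headD 0 ≤ 2 * x := by
        cases M with
        | nil => simp; linarith
        | cons y M' =>
          have hyx : x ≥ y := (List.isChain_cons_cons.1 hchain).1
          simp
          linarith
      have hf' : f (M.map (fun y => 2 * y)) r ≤ 2 * t + 3 := by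
        refine hIH.trans ?_
        have h0 : (M.map (fun y => 2 * y)).headD 0 * 2 / r ≤ 2 * x * 2 / r := by
          gcongr
        rw [ht]
        have h2 : 2 * x * 2 / r = 2 * (x * 2 / r) := by ring
        linarith [h0.trans_eq h2]
      have hexp : Real.exp (-t) * (2 * t + 3) ≤ 3 := by
        rw [Real.exp_neg]
        rw [inv_mul_le_iff₀ (Real.exp_pos t)]
        nlinarith [Real.add_one_le_exp t]
      have hx2 : x * (2 / r) = t := by rw [ht]; ring
      rw [hx2]
      have hm : Real.exp (-t) * f (M.map (fun y => 2 * y)) r ≤ Real.exp (-t) * (2 * t + 3) :=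
        mul_le_mul_of_nonneg_left hf' (Real.exp_pos _).le
      have hhd : ((x :: M).headD 0) * 2 / r = t := by simp [ht]
      rw [hhd]
      linarith

theorem stmt1 (L : List ℝ) (r : ℝ) (hL : L ≠ []) (hr : 0 < r)
    (hchain : L.Chain' (· ≥ ·)) (hle : ∀ x ∈ L, x ≤ r) (hnonneg : ∀ x ∈ L, 0 ≤ x) :
    f L r ≤ 5 := by
  have h := aux L.length L r rfl hr hchain hnonneg
  have hh : L.headD 0 * 2 / r ≤ 2 := by
    cases L with
    | nil => exact absurd rfl hL
    | cons x M =>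
      have hx : x ≤ r := hle x (by simp)
      simp only [List.headD_cons]
      rw [div_le_iff₀ hr]
      linarith
  linarith
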